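/- Suppose the monic real polynomials P_1 and P_2 of degrees d_1 and d_2 realize the sign patterns σ_1 = (+, σ̂_1) and σ_2 = (+, σ̂_2) and have exactly (pos_1, neg_1) and (pos_2, neg_2) positive and negative real roots respectively, all real roots being simple. If the last entry of σ̂_1 is +, then for all sufficiently small ε > 0 the polynomial ε^{d_2} P_1(x) P_2(x/ε) realizes the sign pattern (+, σ̂_1, σ̂_2) and has exactly pos_1 + pos_2 positive and neg_1 + neg_2 negative real roots. -/

import Mathlib

open Polynomial

/-- The concatenation `ε^{d₂} P₁(x) P₂(x/ε)`. -/
noncomputable def concat (P₁ P₂ : Polynomial ℝ) (d₂ : ℕ) (ε : ℝ) : Polynomial ℝ :=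
  C (ε ^ d₂) * P₁ * P₂.comp (C ε⁻¹ * X)


lemma sign_eq_of_near {a b : ℝ} (h : |a - b| < |b|) : Real.sign a = Real.sign b := by
  rcases lt_trichotomy b 0 with hb | hb | hb
  · have h2 := abs_lt.mp h
    rw [abs_of_neg hb] at h2
    rw [Real.sign_of_neg hb, Real.sign_of_neg (by linarith [h2.2])]
  · rw [hb] at h; simp at h; exact absurd h (not_lt.mpr (abs_nonneg a))
  · have h2 := abs_lt.mp h
    rw [abs_of_pos hb] at h2
    rw [Real.sign_of_pos hb, Real.sign_of_pos (by linarith [h2.1])]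

lemma sign_pos_mul {c x : ℝ} (hc : 0 < c) : Real.sign (c * x) = Real.sign x := by
  rcases lt_trichotomy x 0 with hx | hx | hx
  · rw [Real.sign_of_neg hx, Real.sign_of_neg (mul_neg_of_pos_of_neg hc hx)]
  · simp [hx]
  · rw [Real.sign_of_pos hx, Real.sign_of_pos (mul_pos hc hx)]

noncomputable def compEquiv (c : ℝ) (hc : c ≠ 0) : ℝ[X] ≃+* ℝ[X] where
  toFun p := p.comp (C c * X)
  invFun p := p.comp (C c⁻¹ * X)
  left_inv p := by
    show (p.comp (C c * X)).comp (C c⁻¹ * X) = p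
    rw [comp_assoc, mul_comp, C_comp, X_comp, ← mul_assoc, ← C_mul,
        mul_inv_cancel₀ hc, C_1, one_mul, comp_X]
  right_inv p := by
    show (p.comp (C c⁻¹ * X)).comp (C c * X) = p
    rw [comp_assoc, mul_comp, C_comp, X_comp, ← mul_assoc, ← C_mul,
        inv_mul_cancel₀ hc, C_1, one_mul, comp_X]
  map_mul' p q := mul_comp p q _
  map_add' p q := add_comp

lemma comp_C_mul_X_ne_zero {c : ℝ} (hc : c ≠ 0) {P : ℝ[X]} (hP : P ≠ 0) :
    P.comp (C c * X) ≠ 0 := fun h =>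
  hP ((map_eq_zero_iff (compEquiv c hc) (compEquiv c hc).injective).mp h)

lemma rootMultiplicity_comp_C_mul_X {c : ℝ} (hc : c ≠ 0) {P : ℝ[X]} (hP : P ≠ 0) (a : ℝ) :
    rootMultiplicity a (P.comp (C c * X)) = rootMultiplicity (c * a) P := by
  have hQ : P.comp (C c * X) ≠ 0 := comp_C_mul_X_ne_zero hc hP
  have key : ∀ n : ℕ, (X - C a) ^ n ∣ P.comp (C c * X) ↔ (X - C (c * a)) ^ n ∣ P := by
    intro n
    have h1 : ((X - C (c * a)) ^ n).comp (C c * X) = C c ^ n * (X - C a) ^ n := by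
      rw [pow_comp, sub_comp, X_comp, C_comp,
        show C c * X - C (c * a) = C c * (X - C a) by rw [C_mul]; ring, mul_pow]
    have hu : IsUnit (C c ^ n : ℝ[X]) := (isUnit_C.mpr hc.isUnit).pow n
    have h4 : (X - C (c * a)) ^ n ∣ P ↔ C c ^ n * (X - C a) ^ n ∣ P.comp (C c * X) := by
      rw [← h1]
      exact (map_dvd_iff (compEquiv c hc)).symm
    rw [h4, hu.mul_left_dvd]
  refine le_antisymm ?_ ?_
  · exact (le_rootMultiplicity_iff hP).mpr ((key _).mp (pow_rootMultiplicity_dvd _ a))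
  · exact (le_rootMultiplicity_iff hQ).mpr ((key _).mpr (pow_rootMultiplicity_dvd _ (c * a)))

lemma roots_comp_C_mul_X {c : ℝ} (hc : c ≠ 0) {P : ℝ[X]} (hP : P ≠ 0) :
    (P.comp (C c * X)).roots = P.roots.map (fun r => c⁻¹ * r) := by
  classical
  ext b
  have hmap := Multiset.count_map_eq_count' (fun r => c⁻¹ * r) P.roots
    (mul_right_injective₀ (inv_ne_zero hc)) (c * b)
  rw [inv_mul_cancel_left₀ hc] at hmap
  rw [hmap, count_roots, count_roots, rootMultiplicity_comp_C_mul_X hc hP]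



lemma coeff_comp_C_mul_X (P : ℝ[X]) (c : ℝ) (i : ℕ) :
    (P.comp (C c * X)).coeff i = c ^ i * P.coeff i := by
  induction P using Polynomial.induction_on' with
  | add p q hp hq => rw [add_comp, coeff_add, hp, hq, coeff_add, mul_add]
  | monomial n a =>
      have h1 : C a * (C c * X) ^ n = C (a * c ^ n) * X ^ n := by
        rw [mul_pow, ← C_pow, ← mul_assoc, ← C_mul]
      rw [monomial_comp, h1, C_mul_X_pow_eq_monomial, coeff_monomial, coeff_monomial]
      split_ifs with h
      · subst h; ring
      · ring

noncomputable def fAux (P₁ P₂ : ℝ[X]) (d₂ j : ℕ) (ε : ℝ) : ℝ :=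
  ∑ x ∈ Finset.HasAntidiagonal.antidiagonal j, P₁.coeff x.1 * (ε ^ (d₂ - x.2) * P₂.coeff x.2)

lemma fAux_continuous (P₁ P₂ : ℝ[X]) (d₂ j : ℕ) : Continuous (fAux P₁ P₂ d₂ j) := by
  unfold fAux
  exact continuous_finset_sum _ (fun i _ => by fun_prop)

lemma concat_coeff (P₁ P₂ : ℝ[X]) (d₂ j : ℕ) (h₂d : P₂.natDegree = d₂) {ε : ℝ} (hε : ε ≠ 0) :
    (concat P₁ P₂ d₂ ε).coeff j = fAux P₁ P₂ d₂ j ε := by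
  rw [concat, mul_assoc, coeff_C_mul, coeff_mul, Finset.mul_sum, fAux]
  refine Finset.sum_congr rfl ?_
  rintro ⟨a, b⟩ hab
  rw [coeff_comp_C_mul_X]
  simp only
  by_cases hb : b ≤ d₂
  · have hpow : ε ^ d₂ * ε⁻¹ ^ b = ε ^ (d₂ - b) := by
      rw [inv_pow]
      field_simp
      rw [← pow_add]
      congr 1
      omega
    calc ε ^ d₂ * (P₁.coeff a * (ε⁻¹ ^ b * P₂.coeff b))
        = (ε ^ d₂ * ε⁻¹ ^ b) * (P₁.coeff a * P₂.coeff b) := by ring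
      _ = P₁.coeff a * (ε ^ (d₂ - b) * P₂.coeff b) := by rw [hpow]; ring
  · rw [coeff_eq_zero_of_natDegree_lt (by omega : P₂.natDegree < b)]
    ring

lemma fAux_zero (P₁ P₂ : ℝ[X]) (d₂ j : ℕ) (hj : d₂ ≤ j)
    (hc : ∀ b, d₂ < b → b ≤ j → P₂.coeff b = 0) :
    fAux P₁ P₂ d₂ j 0 = P₁.coeff (j - d₂) * P₂.coeff d₂ := by
  rw [fAux, Finset.sum_eq_single_of_mem (j - d₂, d₂)
    (Finset.HasAntidiagonal.mem_antidiagonal.mpr (by omega))]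
  · simp
  · rintro ⟨a, b⟩ hab hne
    rw [Finset.HasAntidiagonal.mem_antidiagonal] at hab
    simp only at hab ⊢
    rcases lt_trichotomy b d₂ with hb | hb | hb
    · rw [zero_pow (by omega)]; ring
    · exact absurd (by rw [Prod.mk.injEq]; constructor <;> omega) hne
    · rw [hc b hb (by omega)]; ring

lemma fAux_factor (P₁ P₂ : ℝ[X]) (d₂ j : ℕ) (hj : j ≤ d₂) (ε : ℝ) :
    fAux P₁ P₂ d₂ j ε = ε ^ (d₂ - j) * fAux P₁ P₂ j j ε := by
  rw [fAux, fAux, Finset.mul_sum]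
  refine Finset.sum_congr rfl ?_
  rintro ⟨a, b⟩ hab
  rw [Finset.HasAntidiagonal.mem_antidiagonal] at hab
  simp only at hab ⊢
  rw [show d₂ - b = (d₂ - j) + (j - b) by omega, pow_add]
  ring

/-- Concatenation lemma, part (1). If monic `P₁, P₂` (degrees `d₁, d₂`,
all coefficients nonzero, simple real roots, exactly `posᵢ` positive and `negᵢ`
negative roots) and the constant coefficient of `P₁` is positive, then for all small
`ε > 0` the polynomial `ε^{d₂} P₁(x) P₂(x/ε)` realizes the sign pattern
`(+, σ̂₁, σ̂₂)` and has exactly `pos₁ + pos₂` positive and `neg₁ + neg₂` negative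
real roots. -/
theorem stmt12 (d₁ d₂ pos₁ neg₁ pos₂ neg₂ : ℕ) (P₁ P₂ : Polynomial ℝ)
    (h₁m : P₁.Monic) (h₂m : P₂.Monic)
    (h₁d : P₁.natDegree = d₁) (h₂d : P₂.natDegree = d₂)
    (hd₁ : 1 ≤ d₁) (hd₂ : 1 ≤ d₂)
    (h₁c : ∀ j ≤ d₁, P₁.coeff j ≠ 0) (h₂c : ∀ j ≤ d₂, P₂.coeff j ≠ 0)
    (h₁nd : P₁.roots.Nodup) (h₂nd : P₂.roots.Nodup)
    (h₁pos : Multiset.card (P₁.roots.filter (fun x => 0 < x)) = pos₁)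
    (h₁neg : Multiset.card (P₁.roots.filter (fun x => x < 0)) = neg₁)
    (h₂pos : Multiset.card (P₂.roots.filter (fun x => 0 < x)) = pos₂)
    (h₂neg : Multiset.card (P₂.roots.filter (fun x => x < 0)) = neg₂)
    (hlast : 0 < P₁.coeff 0) :
    ∃ ε₀ > (0 : ℝ), ∀ ε : ℝ, 0 < ε → ε < ε₀ →
      (∀ j ≤ d₁ + d₂,
        (d₂ ≤ j → Real.sign ((concat P₁ P₂ d₂ ε).coeff j) = Real.sign (P₁.coeff (j - d₂))) ∧
        (j < d₂ → Real.sign ((concat P₁ P₂ d₂ ε).coeff j) = Real.sign (P₂.coeff j))) ∧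
      Multiset.card ((concat P₁ P₂ d₂ ε).roots.filter (fun x => 0 < x)) = pos₁ + pos₂ ∧
      Multiset.card ((concat P₁ P₂ d₂ ε).roots.filter (fun x => x < 0)) = neg₁ + neg₂ := by
  classical
  have hP₁0 : P₁ ≠ 0 := h₁m.ne_zero
  have hP₂0 : P₂ ≠ 0 := h₂m.ne_zero
  -- the core sign-stability fact
  have core : ∀ F : ℝ → ℝ, Continuous F → F 0 ≠ 0 →
      ∀ᶠ ε in nhds (0 : ℝ), Real.sign (F ε) = Real.sign (F 0) := by
    intro F hF h0
    have h1 : Continuous fun ε => |F ε - F 0| := by fun_prop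
    have h2 : Filter.Tendsto (fun ε => |F ε - F 0|) (nhds 0) (nhds 0) := by
      have := h1.tendsto 0
      simpa using this
    have h3 := h2.eventually_lt_const (abs_pos.mpr h0)
    exact h3.mono fun ε hε => sign_eq_of_near hε
  -- the eventual sign statement
  have hev : ∀ᶠ ε in nhds (0 : ℝ), ∀ j ∈ Finset.range (d₁ + d₂ + 1),
      (d₂ ≤ j → Real.sign (fAux P₁ P₂ d₂ j ε) = Real.sign (P₁.coeff (j - d₂))) ∧
      (j < d₂ → Real.sign (fAux P₁ P₂ j j ε) = Real.sign (P₂.coeff j)) := by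
    rw [Filter.eventually_all_finset]
    intro j hj
    rw [Finset.mem_range] at hj
    have hA : ∀ᶠ ε in nhds (0 : ℝ),
        d₂ ≤ j → Real.sign (fAux P₁ P₂ d₂ j ε) = Real.sign (P₁.coeff (j - d₂)) := by
      by_cases hd : d₂ ≤ j
      · have hf0 : fAux P₁ P₂ d₂ j 0 = P₁.coeff (j - d₂) := by
          rw [fAux_zero P₁ P₂ d₂ j hd
            (fun b hb _ => coeff_eq_zero_of_natDegree_lt (by omega)),
            show P₂.coeff d₂ = 1 from h₂d ▸ h₂m.coeff_natDegree, mul_one]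
        have hne : fAux P₁ P₂ d₂ j 0 ≠ 0 := by
          rw [hf0]; exact h₁c _ (by omega)
        have := core _ (fAux_continuous P₁ P₂ d₂ j) hne
        exact this.mono fun ε hε _ => by rw [hε, hf0]
      · exact Filter.Eventually.of_forall fun ε h => absurd h hd
    have hB : ∀ᶠ ε in nhds (0 : ℝ),
        j < d₂ → Real.sign (fAux P₁ P₂ j j ε) = Real.sign (P₂.coeff j) := by
      by_cases hd : j < d₂
      · have hg0 : fAux P₁ P₂ j j 0 = P₁.coeff 0 * P₂.coeff j := by
          rw [fAux_zero P₁ P₂ j j le_rfl (fun b hb hb' => absurd hb (by omega))]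
          simp
        have hne : fAux P₁ P₂ j j 0 ≠ 0 := by
          rw [hg0]
          exact mul_ne_zero (ne_of_gt hlast) (h₂c _ (by omega))
        have := core _ (fAux_continuous P₁ P₂ j j) hne
        exact this.mono fun ε hε _ => by
          rw [hε, hg0, sign_pos_mul hlast]
      · exact Filter.Eventually.of_forall fun ε h => absurd h hd
    exact hA.and hB
  rw [Metric.eventually_nhds_iff] at hev
  obtain ⟨δ, hδ, hball⟩ := hev
  refine ⟨δ, hδ, ?_⟩
  intro ε hε0 hεδ
  have hεne : ε ≠ 0 := ne_of_gt hε0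
  have hsigns := hball (y := ε)
    (by rw [Real.dist_eq, sub_zero, abs_of_pos hε0]; exact hεδ)
  constructor
  · intro j hj
    obtain ⟨hA, hB⟩ := hsigns j (Finset.mem_range.mpr (by omega))
    refine ⟨fun hd => ?_, fun hd => ?_⟩
    · rw [concat_coeff P₁ P₂ d₂ j h₂d hεne]; exact hA hd
    · rw [concat_coeff P₁ P₂ d₂ j h₂d hεne, fAux_factor P₁ P₂ d₂ j (le_of_lt hd),
        sign_pos_mul (pow_pos hε0 _)]
      exact hB hd
  · -- roots
    have hQ0 : P₂.comp (C ε⁻¹ * X) ≠ 0 := comp_C_mul_X_ne_zero (inv_ne_zero hεne) hP₂0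
    have hroots : (concat P₁ P₂ d₂ ε).roots
        = P₁.roots + P₂.roots.map (fun r => ε * r) := by
      rw [concat, mul_assoc, roots_C_mul _ (pow_ne_zero _ hεne),
        roots_mul (mul_ne_zero hP₁0 hQ0),
        roots_comp_C_mul_X (inv_ne_zero hεne) hP₂0, inv_inv]
    constructor
    · rw [hroots, Multiset.filter_add, Multiset.card_add, h₁pos,
        ← Multiset.countP_eq_card_filter, Multiset.countP_map,
        show (P₂.roots.filter fun a => 0 < ε * a) = P₂.roots.filter (fun x => 0 < x) from
          Multiset.filter_congr fun x _ =>
            ⟨fun h => by nlinarith, fun h => mul_pos hε0 h⟩,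
        h₂pos]
    · rw [hroots, Multiset.filter_add, Multiset.card_add, h₁neg,
        ← Multiset.countP_eq_card_filter, Multiset.countP_map,
        show (P₂.roots.filter fun a => ε * a < 0) = P₂.roots.filter (fun x => x < 0) from
          Multiset.filter_congr fun x _ =>
            ⟨fun h => by nlinarith, fun h => mul_neg_of_pos_of_neg hε0 h⟩,
        h₂neg]
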